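/- If there exists a t-(v, k, 1) packing design with b blocks and r = ⌊(k - d - 1)/(t - 1)⌋ ≥ 1, then this set system is an (r; d)-cover-free family with ground set size v and b blocks. -/

import Mathlib

open Finset


/-- A set system `F` on `X` is a `(w,r;d)`-cover-free family. -/
def IsCFF {X : Type} [Fintype X] [DecidableEq X] (w r d : ℕ) (F : Finset (Finset X)) : Prop :=
  ∀ WS RS : Finset (Finset X), WS ⊆ F → RS ⊆ F → WS.card = w → RS.card = r →
    Disjoint WS RS → d < ((WS.inf id) \ (RS.sup id)).card

/-- A `t-(v,k,λ)` packing design: every block has size `k` and every `t`-subset of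
points lies in at most `λ` blocks. -/
def IsPacking {X : Type} [DecidableEq X] (t k lam : ℕ) (B : Finset (Finset X)) : Prop :=
  (∀ b ∈ B, b.card = k) ∧
  ∀ S : Finset X, S.card = t → (B.filter (fun b => S ⊆ b)).card ≤ lam

/-- A `t-(v,k,1)` packing design with `b` blocks is an `(r;d)`-CFF with ground set size `v`
and `b` blocks, where `r = ⌊(k-d-1)/(t-1)⌋`. -/

lemma inter_card_le {X : Type} [DecidableEq X] {t k : ℕ} {B : Finset (Finset X)}
    (hpack : IsPacking t k 1 B) {b₁ b₂ : Finset X} (h1 : b₁ ∈ B) (h2 : b₂ ∈ B)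
    (hne : b₁ ≠ b₂) : (b₁ ∩ b₂).card ≤ t - 1 := by
  by_contra h
  push_neg at h
  obtain ⟨S, hS, hSc⟩ := Finset.exists_subset_card_eq (s := b₁ ∩ b₂) (n := t) (by omega)
  have hle := hpack.2 S hSc
  have h2 : {b₁, b₂} ⊆ B.filter (fun c => S ⊆ c) := by
    intro c hc
    simp only [Finset.mem_insert, Finset.mem_singleton] at hc
    rcases hc with rfl | rfl <;> simp only [Finset.mem_filter]
    · exact ⟨h1, hS.trans Finset.inter_subset_left⟩
    · exact ⟨h2, hS.trans Finset.inter_subset_right⟩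
  have := Finset.card_le_card h2
  rw [Finset.card_pair hne] at this
  omega

theorem packing_is_cff {X : Type} [Fintype X] [DecidableEq X] (t k d v b : ℕ)
    (ht : 2 ≤ t) (hv : Fintype.card X = v)
    (B : Finset (Finset X)) (hb : B.card = b) (hpack : IsPacking t k 1 B)
    (hr : 1 ≤ (k - d - 1) / (t - 1)) :
    IsCFF 1 ((k - d - 1) / (t - 1)) d B := by
  set r := (k - d - 1) / (t - 1) with hrdef
  intro WS RS hWS hRS hcW hcR hdisj
  obtain ⟨w, rfl⟩ := Finset.card_eq_one.mp hcW
  have hwB : w ∈ B := hWS (mem_singleton_self w)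
  have hwRS : w ∉ RS := fun h => (Finset.disjoint_left.mp hdisj (mem_singleton_self w)) h
  rw [Finset.inf_singleton, id]
  -- key inequality: (w ∩ RS.sup id).card ≤ r * (t-1)
  have hinter : (w ∩ RS.sup id).card ≤ r * (t - 1) := by
    have h1 : w ∩ RS.sup id = RS.biUnion (fun a => w ∩ a) := by
      rw [Finset.sup_eq_biUnion]
      ext x; simp [Finset.mem_biUnion]; tauto
    rw [h1]
    calc (RS.biUnion (fun a => w ∩ a)).card ≤ ∑ a ∈ RS, (w ∩ a).card :=
          Finset.card_biUnion_le
      _ ≤ ∑ a ∈ RS, (t - 1) := by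
          apply Finset.sum_le_sum
          intro a ha
          exact inter_card_le hpack hwB (hRS ha) (fun h => hwRS (h ▸ ha))
      _ = r * (t - 1) := by rw [Finset.sum_const, hcR, smul_eq_mul]
  have hrk : r * (t - 1) ≤ k - d - 1 := Nat.div_mul_le_self _ _
  have ht1 : 1 ≤ t - 1 := by omega
  have hkd : t - 1 ≤ k - d - 1 := by
    by_contra h
    push_neg at h
    have := Nat.div_eq_of_lt h
    omega
  have hk : d + 2 ≤ k := by omega
  have hcard : (w \ RS.sup id).card + (w ∩ RS.sup id).card = w.card :=
    Finset.card_sdiff_add_card_inter w _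
  have hwk : w.card = k := hpack.1 w hwB
  omega
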